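/- arXiv:0712.3333 — 5 statements merged into one kernel-verified Lean document; each statement's English description precedes it below -/
import Mathlib

section
/- Let G be a finite simple graph, (i,j) ∈ E an edge of G, and let R ⊆ V(G^{(i,j)}) be a vertex cover of the reduced graph G^{(i,j)}. Define R* = R ∪ Δ_ij ∪ {j} if D_i ⊆ R, and R* = R ∪ Δ_ij ∪ {i} otherwise. Then R* is a vertex cover of G. -/
variable {V : Type*} [Fintype V] [DecidableEq V]

/-- `S` is a vertex cover of `G`: every edge has at least one endpoint in `S`. -/
def IsVertexCover (G : SimpleGraph V) (S : Finset V) : Prop :=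
  ∀ ⦃a b : V⦄, G.Adj a b → a ∈ S ∨ b ∈ S

/-- `Δ_ij`: the common neighbours of `i` and `j`. -/
def DeltaSet (G : SimpleGraph V) [DecidableRel G.Adj] (i j : V) : Finset V :=
  Finset.univ.filter fun k => G.Adj i k ∧ G.Adj j k

/-- `D_i`: the neighbours of `i` other than `j` that are not common neighbours
of `i` and `j`.  (`D_j` is `DSide G j i`.) -/
def DSide (G : SimpleGraph V) [DecidableRel G.Adj] (i j : V) : Finset V :=
  Finset.univ.filter fun s => G.Adj i s ∧ s ≠ j ∧ s ∉ DeltaSet G i j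

/-- The removed vertex set `{i, j} ∪ Δ_ij`. -/
def RemovedSet (G : SimpleGraph V) [DecidableRel G.Adj] (i j : V) : Finset V :=
  insert i (insert j (DeltaSet G i j))

/-- The reduced graph `G^{(i,j)}`: vertices outside `{i,j} ∪ Δ_ij`, with the edges of
`G` between such vertices together with all pairs `(s,t)`, `s ∈ D_i`, `t ∈ D_j`. -/
def ReducedGraph (G : SimpleGraph V) [DecidableRel G.Adj] (i j : V) : SimpleGraph V :=
  SimpleGraph.fromRel fun a b =>
    a ∉ RemovedSet G i j ∧ b ∉ RemovedSet G i j ∧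
      (G.Adj a b ∨ (a ∈ DSide G i j ∧ b ∈ DSide G j i))

/-- `R` is a vertex cover of the reduced graph `G^{(i,j)}`: it is a subset of the
vertex set of `G^{(i,j)}` and covers all its edges. -/
def IsReducedVC (G : SimpleGraph V) [DecidableRel G.Adj] (i j : V) (R : Finset V) :
    Prop :=
  (∀ v ∈ R, v ∉ RemovedSet G i j) ∧
    ∀ ⦃a b : V⦄, (ReducedGraph G i j).Adj a b → a ∈ R ∨ b ∈ R

/-- `R* = R ∪ Δ_ij ∪ {j}` if `D_i ⊆ R`, and `R* = R ∪ Δ_ij ∪ {i}` otherwise. -/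
def RStar (G : SimpleGraph V) [DecidableRel G.Adj] (i j : V) (R : Finset V) :
    Finset V :=
  if DSide G i j ⊆ R then R ∪ DeltaSet G i j ∪ {j} else R ∪ DeltaSet G i j ∪ {i}

/-- If `(i,j)` is an edge of `G` and `R` is a vertex cover of the reduced graph
`G^{(i,j)}`, then `R*` is a vertex cover of `G`. -/
theorem rstar_isVertexCover (G : SimpleGraph V) [DecidableRel G.Adj] (i j : V)
    (hij : G.Adj i j) (R : Finset V) (hR : IsReducedVC G i j R) :
    IsVertexCover G (RStar G i j R) := by
  obtain ⟨hRv, hRe⟩ := hR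
  intro a b hab
  unfold RStar
  split_ifs with hDi
  · by_cases haΔ : a ∈ DeltaSet G i j; · left; simp [haΔ]
    by_cases hbΔ : b ∈ DeltaSet G i j; · right; simp [hbΔ]
    by_cases haj : a = j; · left; simp [haj]
    by_cases hbj : b = j; · right; simp [hbj]
    by_cases hai : a = i
    · have hab' : G.Adj i b := by rwa [hai] at hab
      have hb : b ∈ DSide G i j := by
        simp only [DSide, Finset.mem_filter, Finset.mem_univ, true_and]
        exact ⟨hab', hbj, hbΔ⟩
      right; simp [hDi hb]
    by_cases hbi : b = i
    · have hab' : G.Adj i a := by rw [hbi] at hab; exact hab.symm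
      have ha : a ∈ DSide G i j := by
        simp only [DSide, Finset.mem_filter, Finset.mem_univ, true_and]
        exact ⟨hab', haj, haΔ⟩
      left; simp [hDi ha]
    · have hna : a ∉ RemovedSet G i j := by
        simp [RemovedSet, hai, haj, haΔ]
      have hnb : b ∉ RemovedSet G i j := by
        simp [RemovedSet, hbi, hbj, hbΔ]
      have hred : (ReducedGraph G i j).Adj a b :=
        ⟨hab.ne, Or.inl ⟨hna, hnb, Or.inl hab⟩⟩
      rcases hRe hred with h | h
      · left; simp [h]
      · right; simp [h]
  · obtain ⟨s, hsD, hsR⟩ := Finset.not_subset.mp hDi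
    simp only [DSide, Finset.mem_filter, Finset.mem_univ, true_and] at hsD
    obtain ⟨hsi, hsj, hsΔ⟩ := hsD
    have hsi' : s ≠ i := by rintro rfl; exact G.loopless.irrefl _ hsi
    have hsns : s ∉ RemovedSet G i j := by simp [RemovedSet, hsi', hsj, hsΔ]
    have hsD' : s ∈ DSide G i j := by
      simp only [DSide, Finset.mem_filter, Finset.mem_univ, true_and]
      exact ⟨hsi, hsj, hsΔ⟩
    by_cases haΔ : a ∈ DeltaSet G i j; · left; simp [haΔ]
    by_cases hbΔ : b ∈ DeltaSet G i j; · right; simp [hbΔ]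
    by_cases hai : a = i; · left; simp [hai]
    by_cases hbi : b = i; · right; simp [hbi]
    by_cases haj : a = j
    · have hab' : G.Adj j b := by rwa [haj] at hab
      have hbD : b ∈ DSide G j i := by
        simp only [DSide, Finset.mem_filter, Finset.mem_univ, true_and]
        refine ⟨hab', hbi, ?_⟩
        intro h
        exact hbΔ (by simpa [DeltaSet, and_comm] using h)
      have hnb : b ∉ RemovedSet G i j := by simp [RemovedSet, hbi, hab'.ne', hbΔ]
      have hsb : s ≠ b := by
        rintro rfl
        simp only [DSide, Finset.mem_filter, Finset.mem_univ, true_and] at hbD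
        exact hsΔ (by simp [DeltaSet, hsi, hbD.1])
      have hred : (ReducedGraph G i j).Adj s b :=
        ⟨hsb, Or.inl ⟨hsns, hnb, Or.inr ⟨hsD', hbD⟩⟩⟩
      rcases hRe hred with h | h
      · exact absurd h hsR
      · right; simp [h]
    by_cases hbj : b = j
    · have hab' : G.Adj j a := by rw [hbj] at hab; exact hab.symm
      have haD : a ∈ DSide G j i := by
        simp only [DSide, Finset.mem_filter, Finset.mem_univ, true_and]
        refine ⟨hab', hai, ?_⟩
        intro h
        exact haΔ (by simpa [DeltaSet, and_comm] using h)
      have hna : a ∉ RemovedSet G i j := by simp [RemovedSet, hai, hab'.ne', haΔ]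
      have hsa : s ≠ a := by
        rintro rfl
        simp only [DSide, Finset.mem_filter, Finset.mem_univ, true_and] at haD
        exact hsΔ (by simp [DeltaSet, hsi, haD.1])
      have hred : (ReducedGraph G i j).Adj s a :=
        ⟨hsa, Or.inl ⟨hsns, hna, Or.inr ⟨hsD', haD⟩⟩⟩
      rcases hRe hred with h | h
      · exact absurd h hsR
      · left; simp [h]
    · have hna : a ∉ RemovedSet G i j := by simp [RemovedSet, hai, haj, haΔ]
      have hnb : b ∉ RemovedSet G i j := by simp [RemovedSet, hbi, hbj, hbΔ]
      have hred : (ReducedGraph G i j).Adj a b :=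
        ⟨hab.ne, Or.inl ⟨hna, hnb, Or.inl hab⟩⟩
      rcases hRe hred with h | h
      · left; simp [h]
      · right; simp [h]
end

section
/- Let G be a finite simple graph, (i,j) ∈ E, and let V⁰ be a vertex cover of G with i ∈ V⁰ and j ∉ V⁰. Then Δ_ij ⊆ V⁰ and V¹ = V⁰ \ ({i} ∪ Δ_ij) is a vertex cover of the reduced graph G^{(i,j)}. -/
variable {V : Type*} [Fintype V] [DecidableEq V]

/-- If `(i,j)` is an edge of `G` and `V⁰` is a vertex cover of `G` with `i ∈ V⁰` and
`j ∉ V⁰`, then `Δ_ij ⊆ V⁰` and `V¹ = V⁰ \ ({i} ∪ Δ_ij)` is a vertex cover of the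
reduced graph `G^{(i,j)}`. -/
theorem cover_diff_isReducedVC (G : SimpleGraph V) [DecidableRel G.Adj] (i j : V)
    (hij : G.Adj i j) (V0 : Finset V) (hV0 : IsVertexCover G V0)
    (hi : i ∈ V0) (hj : j ∉ V0) :
    DeltaSet G i j ⊆ V0 ∧
      IsReducedVC G i j (V0 \ insert i (DeltaSet G i j)) := by

  have hDelta : DeltaSet G i j ⊆ V0 := by
    intro k hk
    simp only [DeltaSet, Finset.mem_filter] at hk
    rcases hV0 hk.2.2 with h | h
    · exact absurd h hj
    · exact h
  refine ⟨hDelta, ?_, ?_⟩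
  · intro v hv
    simp only [Finset.mem_sdiff, Finset.mem_insert] at hv
    simp only [RemovedSet, Finset.mem_insert]
    push_neg
    refine ⟨fun h => hv.2 (Or.inl h), fun h => hj (h ▸ hv.1), fun h => hv.2 (Or.inr h)⟩
  · intro a b hab
    obtain ⟨hne, hrel⟩ := hab
    have key : ∀ x y : V, x ∉ RemovedSet G i j ∧ y ∉ RemovedSet G i j ∧
        (G.Adj x y ∨ (x ∈ DSide G i j ∧ y ∈ DSide G j i)) →
        x ∈ V0 \ insert i (DeltaSet G i j) ∨ y ∈ V0 \ insert i (DeltaSet G i j) := by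
      intro x y ⟨hx, hy, hcase⟩
      have hmem : ∀ z : V, z ∉ RemovedSet G i j → z ∈ V0 →
          z ∈ V0 \ insert i (DeltaSet G i j) := by
        intro z hz hzV
        simp only [RemovedSet, Finset.mem_insert] at hz
        push_neg at hz
        simp only [Finset.mem_sdiff, Finset.mem_insert]
        exact ⟨hzV, fun h => h.elim hz.1 hz.2.2⟩
      rcases hcase with hadj | ⟨_, hyD⟩
      · rcases hV0 hadj with h | h
        · exact Or.inl (hmem x hx h)
        · exact Or.inr (hmem y hy h)
      · simp only [DSide, Finset.mem_filter] at hyD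
        have : y ∈ V0 := by
          rcases hV0 hyD.2.1 with h | h
          · exact absurd h hj
          · exact h
        exact Or.inr (hmem y hy this)
    rcases hrel with h | h
    · exact key a b h
    · exact (key b a h).symm
end

section
/- Let G be a finite simple graph and let (i,j) ∈ E be a weak edge of G. If R is an optimal vertex cover of the reduced graph G^{(i,j)}, then R* (defined as R ∪ Δ_ij ∪ {j} if D_i ⊆ R, and R ∪ Δ_ij ∪ {i} otherwise) is an optimal vertex cover of G. -/
variable {V : Type*} [Fintype V] [DecidableEq V]

/-- `S` is an optimal vertex cover of `G`: a vertex cover of minimum cardinality. -/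
def IsOptimalVertexCover (G : SimpleGraph V) (S : Finset V) : Prop :=
  IsVertexCover G S ∧ ∀ T : Finset V, IsVertexCover G T → S.card ≤ T.card

section Aux
variable (G : SimpleGraph V) [DecidableRel G.Adj] (i j : V)

lemma mem_DeltaSet {k : V} : k ∈ DeltaSet G i j ↔ G.Adj i k ∧ G.Adj j k := by
  simp [DeltaSet]

lemma mem_DSide {s : V} :
    s ∈ DSide G i j ↔ G.Adj i s ∧ s ≠ j ∧ s ∉ DeltaSet G i j := by
  simp [DSide]

lemma DeltaSet_comm : DeltaSet G j i = DeltaSet G i j := by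
  ext k; simp [DeltaSet, and_comm]

lemma mem_RemovedSet {v : V} :
    v ∈ RemovedSet G i j ↔ v = i ∨ v = j ∨ (G.Adj i v ∧ G.Adj j v) := by
  simp [RemovedSet, mem_DeltaSet]

lemma RemovedSet_comm : RemovedSet G j i = RemovedSet G i j := by
  ext v; simp [mem_RemovedSet]; tauto

lemma ReducedGraph_comm : ReducedGraph G j i = ReducedGraph G i j := by
  ext a b
  simp only [ReducedGraph, SimpleGraph.fromRel_adj, RemovedSet_comm]
  constructor <;>
    · rintro ⟨hne, (⟨ha, hb, hG | hD⟩ | ⟨hb, ha, hG | hD⟩)⟩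
      · exact ⟨hne, Or.inr ⟨hb, ha, Or.inl hG.symm⟩⟩
      · exact ⟨hne, Or.inr ⟨hb, ha, Or.inr ⟨hD.2, hD.1⟩⟩⟩
      · exact ⟨hne, Or.inl ⟨ha, hb, Or.inl hG.symm⟩⟩
      · exact ⟨hne, Or.inl ⟨ha, hb, Or.inr ⟨hD.2, hD.1⟩⟩⟩

lemma DSide_notmem_Removed {s : V} (hs : s ∈ DSide G i j) : s ∉ RemovedSet G i j := by
  rw [mem_DSide] at hs
  rw [mem_RemovedSet]
  rintro (rfl | rfl | h)
  · exact G.irrefl hs.1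
  · exact hs.2.1 rfl
  · exact hs.2.2 ((mem_DeltaSet G i j).2 h)

/-- From a cover of `G` containing `i` but not `j`, removing the removed set gives a
reduced cover of the right size. -/
lemma reduced_of_cover (hij : G.Adj i j) (V0 : Finset V)
    (hcov : IsVertexCover G V0) (hi : i ∈ V0) (hj : j ∉ V0) :
    IsReducedVC G i j (V0 \ RemovedSet G i j) ∧
      (V0 \ RemovedSet G i j).card + ((DeltaSet G i j).card + 1) = V0.card := by
  have hΔV0 : DeltaSet G i j ⊆ V0 := by
    intro k hk
    rw [mem_DeltaSet] at hk
    rcases hcov hk.2 with h | h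
    · exact absurd h hj
    · exact h
  constructor
  · constructor
    · intro v hv; exact (Finset.mem_sdiff.1 hv).2
    · intro a b hab
      rw [ReducedGraph, SimpleGraph.fromRel_adj] at hab
      obtain ⟨hne, h | h⟩ := hab
      · obtain ⟨ha, hb, hG | ⟨hDa, hDb⟩⟩ := h
        · rcases hcov hG with h' | h'
          · exact Or.inl (Finset.mem_sdiff.2 ⟨h', ha⟩)
          · exact Or.inr (Finset.mem_sdiff.2 ⟨h', hb⟩)
        · -- b ∈ D_j so Adj j b, j ∉ V0 hence b ∈ V0
          rw [mem_DSide] at hDb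
          rcases hcov hDb.1 with h' | h'
          · exact absurd h' hj
          · exact Or.inr (Finset.mem_sdiff.2 ⟨h', hb⟩)
      · obtain ⟨hb, ha, hG | ⟨hDb, hDa⟩⟩ := h
        · rcases hcov hG.symm with h' | h'
          · exact Or.inl (Finset.mem_sdiff.2 ⟨h', ha⟩)
          · exact Or.inr (Finset.mem_sdiff.2 ⟨h', hb⟩)
        · rw [mem_DSide] at hDa
          rcases hcov hDa.1 with h' | h'
          · exact absurd h' hj
          · exact Or.inl (Finset.mem_sdiff.2 ⟨h', ha⟩)
  · have hinter : V0 ∩ RemovedSet G i j = insert i (DeltaSet G i j) := by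
      ext v
      simp only [Finset.mem_inter, Finset.mem_insert, mem_RemovedSet, mem_DeltaSet]
      constructor
      · rintro ⟨hv, rfl | rfl | h⟩
        · exact Or.inl rfl
        · exact absurd hv hj
        · exact Or.inr h
      · rintro (rfl | h)
        · exact ⟨hi, Or.inl rfl⟩
        · exact ⟨hΔV0 ((mem_DeltaSet G i j).2 h), Or.inr (Or.inr h)⟩
    have hiΔ : i ∉ DeltaSet G i j := by
      rw [mem_DeltaSet]; exact fun h => G.irrefl h.1
    have := Finset.card_sdiff_add_card_inter V0 (RemovedSet G i j)
    rw [hinter, Finset.card_insert_of_notMem hiΔ] at this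
    omega

end Aux

/-- If `(i,j)` is a weak edge of `G` and `R` is an optimal vertex cover of the reduced
graph `G^{(i,j)}`, then `R*` is an optimal vertex cover of `G`. -/
theorem rstar_optimal_of_weak (G : SimpleGraph V) [DecidableRel G.Adj] (i j : V)
    (hij : G.Adj i j)
    (hweak : ∃ V0 : Finset V, IsOptimalVertexCover G V0 ∧
      (({i, j} : Finset V) ∩ V0).card = 1)
    (R : Finset V) (hR : IsReducedVC G i j R)
    (hRopt : ∀ T : Finset V, IsReducedVC G i j T → R.card ≤ T.card) :
    IsOptimalVertexCover G (RStar G i j R) := by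
  obtain ⟨V0, ⟨hV0cov, hV0opt⟩, hcard1⟩ := hweak
  obtain ⟨hRsub, hRcov⟩ := hR
  have hne : i ≠ j := hij.ne
  -- basic disjointness facts
  have hiΔ : i ∉ DeltaSet G i j := by
    rw [mem_DeltaSet]; exact fun h => G.irrefl h.1
  have hjΔ : j ∉ DeltaSet G i j := by
    rw [mem_DeltaSet]; exact fun h => G.irrefl h.2
  have hiR : i ∉ R := fun h => hRsub i h ((mem_RemovedSet G i j).2 (Or.inl rfl))
  have hjR : j ∉ R := fun h => hRsub j h ((mem_RemovedSet G i j).2 (Or.inr (Or.inl rfl)))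
  have hRΔ : Disjoint R (DeltaSet G i j) := by
    rw [Finset.disjoint_left]
    intro v hv hvΔ
    exact hRsub v hv ((mem_RemovedSet G i j).2 (Or.inr (Or.inr ((mem_DeltaSet G i j).1 hvΔ))))
  -- cardinality of R*
  have hcardRStar : (RStar G i j R).card = R.card + (DeltaSet G i j).card + 1 := by
    have h1 : (R ∪ DeltaSet G i j).card = R.card + (DeltaSet G i j).card :=
      Finset.card_union_of_disjoint hRΔ
    unfold RStar
    split_ifs with h
    · rw [Finset.union_comm, ← Finset.insert_eq, Finset.card_insert_of_notMem (by
        simp only [Finset.mem_union]; rintro (h' | h'); exacts [hjR h', hjΔ h']), h1]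
    · rw [Finset.union_comm, ← Finset.insert_eq, Finset.card_insert_of_notMem (by
        simp only [Finset.mem_union]; rintro (h' | h'); exacts [hiR h', hiΔ h']), h1]
  -- membership facts about R*
  have hRsubStar : R ⊆ RStar G i j R := by
    intro v hv; unfold RStar; split_ifs <;> exact Finset.mem_union_left _ (Finset.mem_union_left _ hv)
  have hΔsubStar : DeltaSet G i j ⊆ RStar G i j R := by
    intro v hv; unfold RStar; split_ifs <;> exact Finset.mem_union_left _ (Finset.mem_union_right _ hv)
  -- R* is a vertex cover
  have hcover : IsVertexCover G (RStar G i j R) := by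
    intro a b hab
    by_cases haΔ : a ∈ DeltaSet G i j
    · exact Or.inl (hΔsubStar haΔ)
    by_cases hbΔ : b ∈ DeltaSet G i j
    · exact Or.inr (hΔsubStar hbΔ)
    by_cases hDi : DSide G i j ⊆ R
    · -- R* = R ∪ Δ ∪ {j}
      have hjStar : j ∈ RStar G i j R := by
        unfold RStar; rw [if_pos hDi]
        exact Finset.mem_union_right _ (Finset.mem_singleton_self j)
      by_cases haj : a = j
      · exact Or.inl (haj ▸ hjStar)
      by_cases hbj : b = j
      · exact Or.inr (hbj ▸ hjStar)
      by_cases hai : a = i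
      · -- edge (i, b), b ≠ j, b ∉ Δ ⟹ b ∈ D_i ⊆ R
        exact Or.inr (hRsubStar (hDi ((mem_DSide G i j).2 ⟨hai ▸ hab, hbj, hbΔ⟩)))
      by_cases hbi : b = i
      · exact Or.inl (hRsubStar (hDi ((mem_DSide G i j).2 ⟨hbi ▸ hab.symm, haj, haΔ⟩)))
      -- both outside removed set: a G-edge of the reduced graph
      have ha : a ∉ RemovedSet G i j := by
        rw [mem_RemovedSet]; rintro (rfl | rfl | h); exacts [hai rfl, haj rfl,
          haΔ ((mem_DeltaSet G i j).2 h)]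
      have hb : b ∉ RemovedSet G i j := by
        rw [mem_RemovedSet]; rintro (rfl | rfl | h); exacts [hbi rfl, hbj rfl,
          hbΔ ((mem_DeltaSet G i j).2 h)]
      have : (ReducedGraph G i j).Adj a b := by
        rw [ReducedGraph, SimpleGraph.fromRel_adj]
        exact ⟨hab.ne, Or.inl ⟨ha, hb, Or.inl hab⟩⟩
      rcases hRcov this with h | h
      · exact Or.inl (hRsubStar h)
      · exact Or.inr (hRsubStar h)
    · -- R* = R ∪ Δ ∪ {i}; get s ∈ D_i \ R, so D_j ⊆ R
      have hiStar : i ∈ RStar G i j R := by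
        unfold RStar; rw [if_neg hDi]
        exact Finset.mem_union_right _ (Finset.mem_singleton_self i)
      obtain ⟨s, hs, hsR⟩ := Finset.not_subset.1 hDi
      have hDj : ∀ t ∈ DSide G j i, t ∈ R := by
        intro t ht
        have hst : s ≠ t := by
          rintro rfl
          rw [mem_DSide] at hs ht
          exact hs.2.2 ((mem_DeltaSet G i j).2 ⟨hs.1, ht.1⟩)
        have : (ReducedGraph G i j).Adj s t := by
          rw [ReducedGraph, SimpleGraph.fromRel_adj]
          refine ⟨hst, Or.inl ⟨DSide_notmem_Removed G i j hs, ?_, Or.inr ⟨hs, ht⟩⟩⟩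
          rw [← RemovedSet_comm]
          exact DSide_notmem_Removed G j i ht
        rcases hRcov this with h | h
        · exact absurd h hsR
        · exact h
      by_cases hai : a = i
      · exact Or.inl (hai ▸ hiStar)
      by_cases hbi : b = i
      · exact Or.inr (hbi ▸ hiStar)
      by_cases haj : a = j
      · -- edge (j, b), b ≠ i, b ∉ Δ ⟹ b ∈ D_j ⊆ R
        refine Or.inr (hRsubStar (hDj b ((mem_DSide G j i).2 ⟨haj ▸ hab, hbi, ?_⟩)))
        rw [DeltaSet_comm]; exact hbΔ
      by_cases hbj : b = j
      · refine Or.inl (hRsubStar (hDj a ((mem_DSide G j i).2 ⟨hbj ▸ hab.symm, hai, ?_⟩)))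
        rw [DeltaSet_comm]; exact haΔ
      have ha : a ∉ RemovedSet G i j := by
        rw [mem_RemovedSet]; rintro (rfl | rfl | h); exacts [hai rfl, haj rfl,
          haΔ ((mem_DeltaSet G i j).2 h)]
      have hb : b ∉ RemovedSet G i j := by
        rw [mem_RemovedSet]; rintro (rfl | rfl | h); exacts [hbi rfl, hbj rfl,
          hbΔ ((mem_DeltaSet G i j).2 h)]
      have : (ReducedGraph G i j).Adj a b := by
        rw [ReducedGraph, SimpleGraph.fromRel_adj]
        exact ⟨hab.ne, Or.inl ⟨ha, hb, Or.inl hab⟩⟩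
      rcases hRcov this with h | h
      · exact Or.inl (hRsubStar h)
      · exact Or.inr (hRsubStar h)
  -- exactly one of i, j is in V0
  have hone : (i ∈ V0 ∧ j ∉ V0) ∨ (j ∈ V0 ∧ i ∉ V0) := by
    by_cases hi : i ∈ V0 <;> by_cases hj : j ∈ V0
    · exfalso
      have : ({i, j} : Finset V) ∩ V0 = {i, j} := by
        ext v
        simp only [Finset.mem_inter, Finset.mem_insert, Finset.mem_singleton]
        constructor
        · exact fun h => h.1
        · rintro (rfl | rfl) <;> exact ⟨by simp, by assumption⟩
      rw [this, Finset.card_insert_of_notMem (by simp [hne]), Finset.card_singleton] at hcard1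
      omega
    · exact Or.inl ⟨hi, hj⟩
    · exact Or.inr ⟨hj, hi⟩
    · exfalso
      have : ({i, j} : Finset V) ∩ V0 = ∅ := by
        ext v
        simp only [Finset.mem_inter, Finset.mem_insert, Finset.mem_singleton,
          Finset.notMem_empty, iff_false]
        rintro ⟨rfl | rfl, h⟩ <;> tauto
      rw [this] at hcard1
      simp at hcard1
  -- size bound: R.card + Δ.card + 1 ≤ V0.card
  have hbound : R.card + (DeltaSet G i j).card + 1 ≤ V0.card := by
    rcases hone with ⟨hi, hj⟩ | ⟨hj, hi⟩
    · obtain ⟨hT, hTcard⟩ := reduced_of_cover G i j hij V0 hV0cov hi hj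
      have := hRopt _ hT
      omega
    · obtain ⟨hT, hTcard⟩ := reduced_of_cover G j i hij.symm V0 hV0cov hj hi
      have e : RemovedSet G j i = RemovedSet G i j := RemovedSet_comm G i j
      rw [e, DeltaSet_comm] at hTcard
      have hT' : IsReducedVC G i j (V0 \ RemovedSet G i j) := by
        refine ⟨fun v hv => ?_, fun a b hab => ?_⟩
        · rw [← e]; exact hT.1 v (by rw [e]; exact hv)
        · have h2 := hT.2 (show (ReducedGraph G j i).Adj a b by rwa [ReducedGraph_comm])
          rwa [e] at h2
      have := hRopt _ hT'
      omega
  refine ⟨hcover, fun T hT => ?_⟩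
  calc (RStar G i j R).card = R.card + (DeltaSet G i j).card + 1 := hcardRStar
    _ ≤ V0.card := hbound
    _ ≤ T.card := hV0opt T hT
end

section
/- Let G be a finite simple graph, let x* be an optimal solution of the LP relaxation LPR of the vertex cover problem on G, let I₀ = {i : x*_i = 0}, I₁ = {i : x*_i = 1}, and let Ḡ = G \ (I₀ ∪ I₁) be the induced subgraph on V \ (I₀ ∪ I₁). If R is a vertex cover of Ḡ, then R ∪ I₁ is a vertex cover of G. -/
variable {V : Type*} [Fintype V] [DecidableEq V]

/-- `x` is feasible for the LP relaxation LPR of the vertex cover problem on `G`: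
`x_i + x_j ≥ 1` for every edge `(i,j)` and `x_i ≥ 0` for all `i`. -/
def LPFeasible (G : SimpleGraph V) (x : V → ℝ) : Prop :=
  (∀ i : V, 0 ≤ x i) ∧ ∀ ⦃i j : V⦄, G.Adj i j → 1 ≤ x i + x j

/-- `x` is an optimal solution of the LP relaxation LPR on `G`. -/
def LPOptimal (G : SimpleGraph V) (x : V → ℝ) : Prop :=
  LPFeasible G x ∧ ∀ y : V → ℝ, LPFeasible G y → ∑ i : V, x i ≤ ∑ i : V, y i

/-- `G \ D`: the induced subgraph of `G` on `V \ D`, viewed as a graph on the same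
vertex type by deleting all edges meeting `D`. -/
def DeleteVerts (G : SimpleGraph V) (D : Finset V) : SimpleGraph V where
  Adj a b := G.Adj a b ∧ a ∉ D ∧ b ∉ D
  symm := ⟨fun _ _ h => ⟨h.1.symm, h.2.2, h.2.1⟩⟩
  loopless := ⟨fun a h => G.loopless.irrefl a h.1⟩

/-- Let `x*` be an optimal solution of LPR on `G`, `I₀ = {i : x*_i = 0}`,
`I₁ = {i : x*_i = 1}` and `Ḡ = G \ (I₀ ∪ I₁)`.  If `R` is a vertex cover of `Ḡ`,
then `R ∪ I₁` is a vertex cover of `G`. -/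
theorem nemhauser_trotter_cover (G : SimpleGraph V) (xstar : V → ℝ)
    (hx : LPOptimal G xstar) (I0 I1 : Finset V)
    (hI0 : ∀ i : V, i ∈ I0 ↔ xstar i = 0) (hI1 : ∀ i : V, i ∈ I1 ↔ xstar i = 1)
    (R : Finset V) (hR : IsVertexCover (DeleteVerts G (I0 ∪ I1)) R) :
    IsVertexCover G (R ∪ I1) := by
  obtain ⟨⟨hnn, hedge⟩, hopt⟩ := hx
  -- x* i ≤ 1 for all i
  have hle1 : ∀ i : V, xstar i ≤ 1 := by
    have hyfeas : LPFeasible G (fun i => min (xstar i) 1) := by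
      constructor
      · intro i; exact le_min (hnn i) zero_le_one
      · intro i j hij
        rcases le_or_gt 1 (xstar i) with h | h
        · have : (1:ℝ) ≤ min (xstar i) 1 := le_min h le_rfl
          linarith [le_min (hnn j) (zero_le_one (α := ℝ))]
        rcases le_or_gt 1 (xstar j) with h' | h'
        · have : (1:ℝ) ≤ min (xstar j) 1 := le_min h' le_rfl
          linarith [le_min (hnn i) (zero_le_one (α := ℝ))]
        · have := hedge hij
          simp only [min_eq_left h.le, min_eq_left h'.le]; linarith
    have hsum := hopt _ hyfeas
    have hpt : ∀ i : V, min (xstar i) 1 = xstar i := by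
      by_contra hc
      push_neg at hc
      obtain ⟨i, hi⟩ := hc
      have hlt : min (xstar i) 1 < xstar i := lt_of_le_of_ne (min_le_left _ _) hi
      have : ∑ j : V, min (xstar j) 1 < ∑ j : V, xstar j :=
        Finset.sum_lt_sum (fun j _ => min_le_left _ _) ⟨i, Finset.mem_univ i, hlt⟩
      linarith
    intro i
    have := hpt i
    by_contra h
    push_neg at h
    rw [min_eq_right h.le] at this
    linarith
  intro a b hab
  by_cases ha1 : a ∈ I1
  · exact Or.inl (Finset.mem_union_right _ ha1)
  by_cases hb1 : b ∈ I1
  · exact Or.inr (Finset.mem_union_right _ hb1)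
  by_cases ha0 : a ∈ I0
  · exfalso
    have h0 : xstar a = 0 := (hI0 a).mp ha0
    have := hedge hab
    have : xstar b = 1 := le_antisymm (hle1 b) (by linarith)
    exact hb1 ((hI1 b).mpr this)
  by_cases hb0 : b ∈ I0
  · exfalso
    have h0 : xstar b = 0 := (hI0 b).mp hb0
    have := hedge hab
    have : xstar a = 1 := le_antisymm (hle1 a) (by linarith)
    exact ha1 ((hI1 a).mpr this)
  · have : (DeleteVerts G (I0 ∪ I1)).Adj a b := by
      refine ⟨hab, ?_, ?_⟩ <;> simp [ha0, ha1, hb0, hb1]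
    rcases hR this with h | h
    · exact Or.inl (Finset.mem_union_left _ h)
    · exact Or.inr (Finset.mem_union_left _ h)
end

section
/- Let G be a finite simple graph, let x* be an optimal solution of the LP relaxation LPR of the vertex cover problem on G, let I₀ = {i : x*_i = 0}, I₁ = {i : x*_i = 1}, and let Ḡ = G \ (I₀ ∪ I₁). If R is an optimal vertex cover of Ḡ, then R ∪ I₁ is an optimal vertex cover of G. -/
variable {V : Type*} [Fintype V] [DecidableEq V]

/-- Let `x*` be an optimal solution of LPR on `G`, `I₀ = {i : x*_i = 0}`,
`I₁ = {i : x*_i = 1}` and `Ḡ = G \ (I₀ ∪ I₁)`.  If `R` is an optimal vertex cover of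
`Ḡ`, then `R ∪ I₁` is an optimal vertex cover of `G`. -/
theorem nemhauser_trotter_optimal_cover (G : SimpleGraph V) (xstar : V → ℝ)
    (hx : LPOptimal G xstar) (I0 I1 : Finset V)
    (hI0 : ∀ i : V, i ∈ I0 ↔ xstar i = 0) (hI1 : ∀ i : V, i ∈ I1 ↔ xstar i = 1)
    (R : Finset V) (hR : IsOptimalVertexCover (DeleteVerts G (I0 ∪ I1)) R) :
    IsOptimalVertexCover G (R ∪ I1) := by
  obtain ⟨⟨hx0, hxe⟩, hopt⟩ := hx
  -- x* ≤ 1 everywhere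
  have hle1 : ∀ i : V, xstar i ≤ 1 := by
    have hyfeas : LPFeasible G (fun i => min (xstar i) 1) := by
      refine ⟨fun i => le_min (hx0 i) one_pos.le, fun i j hij => ?_⟩
      have := hxe hij
      simp only [min_def]
      split_ifs <;> linarith [hx0 i, hx0 j]
    have hsum := hopt _ hyfeas
    by_contra hcon
    push_neg at hcon
    obtain ⟨i, hi⟩ := hcon
    have hlt : ∑ k : V, min (xstar k) 1 < ∑ k : V, xstar k := by
      apply Finset.sum_lt_sum (fun k _ => min_le_left _ _)
      refine ⟨i, Finset.mem_univ i, ?_⟩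
      simp only [min_def]
      rw [if_neg (not_le.2 hi)]
      exact hi
    linarith
  have hdisj01 : Disjoint I0 I1 := by
    rw [Finset.disjoint_left]
    intro a h0 h1
    have e0 := (hI0 a).1 h0
    have e1 := (hI1 a).1 h1
    linarith
  -- R is disjoint from I0 ∪ I1
  have hRdisj : Disjoint R (I0 ∪ I1) := by
    rw [Finset.disjoint_left]
    intro v hvR hvI
    have hcov' : IsVertexCover (DeleteVerts G (I0 ∪ I1)) (R.erase v) := by
      intro a b hab
      rcases hR.1 hab with h | h
      · exact Or.inl (Finset.mem_erase.2 ⟨fun e => hab.2.1 (e ▸ hvI), h⟩)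
      · exact Or.inr (Finset.mem_erase.2 ⟨fun e => hab.2.2 (e ▸ hvI), h⟩)
    have h1 := hR.2 _ hcov'
    have h2 := Finset.card_erase_lt_of_mem hvR
    omega
  constructor
  · -- cover
    intro a b hab
    by_cases ha : a ∈ I0 ∪ I1
    · rcases Finset.mem_union.1 ha with h | h
      · refine Or.inr (Finset.mem_union.2 (Or.inr ((hI1 b).2 ?_)))
        have h0 : xstar a = 0 := (hI0 a).1 h
        have h1 := hxe hab
        have h2 := hle1 b
        linarith
      · exact Or.inl (Finset.mem_union.2 (Or.inr h))
    · by_cases hb : b ∈ I0 ∪ I1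
      · rcases Finset.mem_union.1 hb with h | h
        · refine Or.inl (Finset.mem_union.2 (Or.inr ((hI1 a).2 ?_)))
          have h0 : xstar b = 0 := (hI0 b).1 h
          have h1 := hxe hab
          have h2 := hle1 a
          linarith
        · exact Or.inr (Finset.mem_union.2 (Or.inr h))
      · rcases hR.1 ⟨hab, ha, hb⟩ with h | h
        · exact Or.inl (Finset.mem_union.2 (Or.inl h))
        · exact Or.inr (Finset.mem_union.2 (Or.inl h))
  · -- optimality
    intro T hT
    -- T \ (I0 ∪ I1) covers the reduced graph
    have hTc : IsVertexCover (DeleteVerts G (I0 ∪ I1)) (T \ (I0 ∪ I1)) := by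
      intro a b hab
      rcases hT hab.1 with h | h
      · exact Or.inl (Finset.mem_sdiff.2 ⟨h, hab.2.1⟩)
      · exact Or.inr (Finset.mem_sdiff.2 ⟨h, hab.2.2⟩)
    have hRle : R.card ≤ (T \ (I0 ∪ I1)).card := hR.2 _ hTc
    -- key inequality via LP perturbation
    have hkey : (I1 \ T).card ≤ (T ∩ I0).card := by
      by_contra hlt
      push_neg at hlt
      set s := Finset.univ.filter (fun i => 0 < xstar i) with hs
      set ε := min (1/2 : ℝ) (if h : s.Nonempty then s.inf' h xstar else 1) with hε
      have hεpos : 0 < ε := by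
        apply lt_min (by norm_num)
        split_ifs with h
        · exact (Finset.lt_inf'_iff h).2 (fun i hi => (Finset.mem_filter.1 hi).2)
        · norm_num
      have hεle : ∀ j : V, 0 < xstar j → ε ≤ xstar j := by
        intro j hj
        have hjs : j ∈ s := by simp [hs, hj]
        have hsne : s.Nonempty := ⟨j, hjs⟩
        have h2 : (if h : s.Nonempty then s.inf' h xstar else 1) ≤ xstar j := by
          rw [dif_pos hsne]; exact Finset.inf'_le _ hjs
        exact le_trans (min_le_right _ _) h2
      have hεhalf : ε ≤ 1/2 := min_le_left _ _
      set y : V → ℝ := fun i =>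
        if i ∈ I1 \ T then xstar i - ε else if i ∈ T ∩ I0 then xstar i + ε else xstar i with hy
      have hyfeas : LPFeasible G y := by
        constructor
        · intro i
          by_cases hiA : i ∈ I1 \ T
          · have hx1 : xstar i = 1 := (hI1 i).1 (Finset.mem_sdiff.1 hiA).1
            simp only [hy, if_pos hiA]; linarith
          · by_cases hiB : i ∈ T ∩ I0
            · simp only [hy, if_neg hiA, if_pos hiB]; linarith [hx0 i]
            · simp only [hy, if_neg hiA, if_neg hiB]; exact hx0 i
        · intro i j hij
          by_cases hiA : i ∈ I1 \ T
          · by_cases hjA : j ∈ I1 \ T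
            · exfalso
              rcases hT hij with h | h
              · exact (Finset.mem_sdiff.1 hiA).2 h
              · exact (Finset.mem_sdiff.1 hjA).2 h
            · have hxi : xstar i = 1 := (hI1 i).1 (Finset.mem_sdiff.1 hiA).1
              have hiT : i ∉ T := (Finset.mem_sdiff.1 hiA).2
              have hjT : j ∈ T := (hT hij).resolve_left hiT
              by_cases hjB : j ∈ T ∩ I0
              · have hxj : xstar j = 0 := (hI0 j).1 (Finset.mem_inter.1 hjB).2
                simp only [hy, if_pos hiA, if_neg hjA, if_pos hjB]; linarith
              · have hj0 : j ∉ I0 := fun h => hjB (Finset.mem_inter.2 ⟨hjT, h⟩)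
                have hxjpos : 0 < xstar j :=
                  lt_of_le_of_ne (hx0 j) (fun e => hj0 ((hI0 j).2 e.symm))
                have h3 := hεle j hxjpos
                simp only [hy, if_pos hiA, if_neg hjA, if_neg hjB]; linarith
          · by_cases hjA : j ∈ I1 \ T
            · have hxj : xstar j = 1 := (hI1 j).1 (Finset.mem_sdiff.1 hjA).1
              have hjT : j ∉ T := (Finset.mem_sdiff.1 hjA).2
              have hiT : i ∈ T := (hT hij).resolve_right hjT
              by_cases hiB : i ∈ T ∩ I0
              · have hxi : xstar i = 0 := (hI0 i).1 (Finset.mem_inter.1 hiB).2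
                simp only [hy, if_pos hjA, if_neg hiA, if_pos hiB]; linarith
              · have hi0 : i ∉ I0 := fun h => hiB (Finset.mem_inter.2 ⟨hiT, h⟩)
                have hxipos : 0 < xstar i :=
                  lt_of_le_of_ne (hx0 i) (fun e => hi0 ((hI0 i).2 e.symm))
                have h3 := hεle i hxipos
                simp only [hy, if_pos hjA, if_neg hiA, if_neg hiB]; linarith
            · have h1 : xstar i ≤ y i := by
                simp only [hy, if_neg hiA]; split_ifs <;> linarith
              have h2 : xstar j ≤ y j := by
                simp only [hy, if_neg hjA]; split_ifs <;> linarith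
              have h3 := hxe hij
              linarith
      have hAB : Disjoint (I1 \ T) (T ∩ I0) := by
        rw [Finset.disjoint_left]
        intro a hA hB
        exact (Finset.mem_sdiff.1 hA).2 (Finset.mem_inter.1 hB).1
      have hsumdiff : ∑ i : V, (y i - xstar i)
          = ε * (T ∩ I0).card - ε * (I1 \ T).card := by
        have hpt : ∀ i : V, y i - xstar i
            = (if i ∈ I1 \ T then (-ε : ℝ) else 0) + (if i ∈ T ∩ I0 then ε else 0) := by
          intro i
          by_cases hiA : i ∈ I1 \ T
          · have hiB : i ∉ T ∩ I0 := fun h => (Finset.disjoint_left.1 hAB hiA) h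
            simp only [hy, if_pos hiA, if_neg hiB]; ring
          · by_cases hiB : i ∈ T ∩ I0
            · simp only [hy, if_neg hiA, if_pos hiB]; ring
            · simp only [hy, if_neg hiA, if_neg hiB]; ring
        rw [Finset.sum_congr rfl (fun i _ => hpt i), Finset.sum_add_distrib]
        rw [Finset.sum_ite_mem, Finset.sum_ite_mem, Finset.univ_inter, Finset.univ_inter]
        rw [Finset.sum_const, Finset.sum_const]
        ring
      have hle := hopt y hyfeas
      have hsumsub : ∑ i : V, (y i - xstar i) = ∑ i : V, y i - ∑ i : V, xstar i :=
        Finset.sum_sub_distrib _ _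
      have hcast : ((T ∩ I0).card : ℝ) < ((I1 \ T).card : ℝ) := by exact_mod_cast hlt
      nlinarith [hεpos]
    -- final counting
    have hRI1 : Disjoint R I1 :=
      hRdisj.mono_right (Finset.subset_union_right)
    have hc1 : (R ∪ I1).card = R.card + I1.card := Finset.card_union_of_disjoint hRI1
    have hc2 : (I1 ∩ T).card + (I1 \ T).card = I1.card :=
      Finset.card_inter_add_card_sdiff I1 T
    have hc3 : (T \ (I0 ∪ I1)).card + (T ∩ (I0 ∪ I1)).card = T.card :=
      Finset.card_sdiff_add_card_inter T (I0 ∪ I1)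
    have hc4 : T ∩ (I0 ∪ I1) = (T ∩ I0) ∪ (T ∩ I1) := Finset.inter_union_distrib_left T I0 I1
    have hc5 : (T ∩ (I0 ∪ I1)).card = (T ∩ I0).card + (T ∩ I1).card := by
      rw [hc4]
      exact Finset.card_union_of_disjoint
        ((hdisj01.mono_left (Finset.inter_subset_right)).mono_right Finset.inter_subset_right)
    have hc6 : (I1 ∩ T).card = (T ∩ I1).card := by rw [Finset.inter_comm]
    omega
end
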